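/- For n even and λ ≠ 0, the quantity −½(λ/4)^{n/2−1}·∑_{k=0}^{n/2−1} C(n,k)(−1)^k equals −¼(−λ/4)^{n/2−1}·n!/((n/2)!²). Consequently, the Hessian of the renormalized volume at an Einstein metric h₀ with Ric = λ(n−1)h₀ is Hess(V_n) = −¼(−λ/4)^{n/2−1}·(n!/((n/2)!²))·h₀^{-1}. -/

import Mathlib

lemma key_int_aux (m : ℕ) (hm : 1 ≤ m) :
    (2:ℤ) * ∑ k ∈ Finset.range m, ((2*m).choose k : ℤ) * (-1)^k
      = ((2*m).choose m : ℤ) * (-1)^(m-1) := by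
  have h0 : ∑ i ∈ Finset.range (2*m + 1), (-1:ℤ)^i * ((2*m).choose i : ℤ) = 0 := by
    rw [Int.alternating_sum_range_choose, if_neg (by omega)]
  have hsplit : ∑ i ∈ Finset.range m, (-1:ℤ)^i * ((2*m).choose i : ℤ)
      + ∑ i ∈ Finset.Ico m (2*m+1), (-1:ℤ)^i * ((2*m).choose i : ℤ)
      = ∑ i ∈ Finset.range (2*m + 1), (-1:ℤ)^i * ((2*m).choose i : ℤ) := by
    simp only [Finset.range_eq_Ico]
    exact Finset.sum_Ico_consecutive _ (by omega) (by omega)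
  have htail : ∑ i ∈ Finset.Ico m (2*m+1), (-1:ℤ)^i * ((2*m).choose i : ℤ)
      = ∑ k ∈ Finset.range (m+1), (-1:ℤ)^k * ((2*m).choose k : ℤ) := by
    refine Finset.sum_nbij' (fun i => 2*m - i) (fun k => 2*m - k) ?_ ?_ ?_ ?_ ?_
    · intro a ha; simp only [Finset.mem_Ico] at ha; simp only [Finset.mem_range]; omega
    · intro a ha; simp only [Finset.mem_range] at ha; simp only [Finset.mem_Ico]; omega
    · intro a ha; simp only [Finset.mem_Ico] at ha; omega
    · intro a ha; simp only [Finset.mem_range] at ha; omega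
    · intro a ha; simp only [Finset.mem_Ico] at ha
      have h1 : (2*m).choose (2*m - a) = (2*m).choose a := Nat.choose_symm (by omega)
      have h2 : (-1:ℤ)^(2*m - a) = (-1)^a := by
        have hx : ((-1:ℤ)^(2*m-a)) * (-1)^a = 1 := by
          rw [← pow_add, (by omega : 2*m - a + a = 2*m), pow_mul]; norm_num
        have ha2 : ((-1:ℤ)^a) * (-1)^a = 1 := by
          rw [← pow_add, ← two_mul, pow_mul]; norm_num
        calc (-1:ℤ)^(2*m-a) = (-1)^(2*m-a) * ((-1)^a * (-1)^a) := by rw [ha2]; ring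
          _ = ((-1)^(2*m-a) * (-1)^a) * (-1)^a := by ring
          _ = (-1)^a := by rw [hx]; ring
      rw [h1, h2]
  rw [Finset.sum_range_succ] at htail
  rw [htail, h0] at hsplit
  have hm1 : (-1:ℤ)^m = -(-1)^(m-1) := by
    conv_lhs => rw [← Nat.sub_add_cancel hm]
    rw [pow_succ]; ring
  have hrw : ∑ k ∈ Finset.range m, ((2*m).choose k : ℤ) * (-1)^k
      = ∑ i ∈ Finset.range m, (-1:ℤ)^i * ((2*m).choose i : ℤ) :=
    Finset.sum_congr rfl (fun x _ => by ring)
  rw [hrw]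
  linear_combination hsplit - (((2*m).choose m : ℤ)) * hm1

lemma key_real_aux (m : ℕ) (hm : 1 ≤ m) :
    (2:ℝ) * ∑ k ∈ Finset.range m, ((2*m).choose k : ℝ) * (-1)^k
      = ((2*m).choose m : ℝ) * (-1)^(m-1) := by
  exact_mod_cast key_int_aux m hm

/-- For `n` even (`n ≥ 2`) and `λ ≠ 0`, the quantity
`−½(λ/4)^{n/2−1}·∑_{k=0}^{n/2−1} C(n,k)(−1)^k` equals
`−¼(−λ/4)^{n/2−1}·n!/((n/2)!²)`.  Consequently, the Hessian of the renormalized volume at an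
Einstein metric `h₀` with `Ric = λ(n−1)h₀`, namely the coefficient of `h₀⁻¹` in
`Hess(V_n) = −∑_{j=1}^{n/2}(1/(2j))·v_{n−2j}·h^{(2j−2)}` (where `v_{2j} = C(n,j)(−λ/4)^j` and
`h^{(2j)} = (j+1)(λ/4)^j h₀⁻¹`), equals `−¼(−λ/4)^{n/2−1}·(n!/((n/2)!²))`. -/
theorem hessian_renormalized_volume_einstein (n : ℕ) (hn : Even n) (h2 : 2 ≤ n)
    (lam : ℝ) (hlam : lam ≠ 0) :
    (-(1 / 2) * (lam / 4) ^ (n / 2 - 1)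
        * ∑ k ∈ Finset.range (n / 2), (n.choose k : ℝ) * (-1) ^ k
      = -(1 / 4) * (-lam / 4) ^ (n / 2 - 1) * ((n.factorial : ℝ) / ((n / 2).factorial : ℝ) ^ 2))
    ∧ (-(∑ j ∈ Finset.range (n / 2 + 1) \ {0},
          (1 / (2 * (j : ℝ))) * ((n.choose (n / 2 - j) : ℝ) * (-lam / 4) ^ (n / 2 - j))
            * ((j : ℝ) * (lam / 4) ^ (j - 1)))
      = -(1 / 4) * (-lam / 4) ^ (n / 2 - 1) * ((n.factorial : ℝ) / ((n / 2).factorial : ℝ) ^ 2)) := by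
  obtain ⟨m, rfl⟩ := hn
  have hmm : m + m = 2 * m := by ring
  have hd : (m + m) / 2 = m := by omega
  have hm : 1 ≤ m := by omega
  rw [hd, hmm]
  have hkey := key_real_aux m hm
  have hC : ((2*m).factorial : ℝ) / ((m.factorial : ℝ))^2 = ((2*m).choose m : ℝ) := by
    rw [Nat.cast_choose ℝ (by omega : m ≤ 2*m), (by omega : 2*m - m = m)]
    ring
  rw [hC]
  have hneg : (-lam/4 : ℝ) = (-1) * (lam/4) := by ring
  have hfirst : -(1 / 2) * (lam / 4) ^ (m - 1)
        * ∑ k ∈ Finset.range m, ((2*m).choose k : ℝ) * (-1) ^ k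
      = -(1 / 4) * (-lam / 4) ^ (m - 1) * ((2*m).choose m : ℝ) := by
    rw [hneg, mul_pow]
    linear_combination (-(1/4) * (lam/4)^(m-1)) * hkey
  refine ⟨hfirst, ?_⟩
  have hsum : ∑ j ∈ Finset.range (m + 1) \ {0},
        (1 / (2 * (j : ℝ))) * (((2*m).choose (m - j) : ℝ) * (-lam / 4) ^ (m - j))
          * ((j : ℝ) * (lam / 4) ^ (j - 1))
      = ∑ k ∈ Finset.range m,
          ((2*m).choose k : ℝ) * (-1) ^ k * ((1/2) * (lam / 4) ^ (m - 1)) := by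
    refine Finset.sum_nbij' (fun j => m - j) (fun k => m - k) ?_ ?_ ?_ ?_ ?_
    · intro a ha
      simp only [Finset.mem_sdiff, Finset.mem_range, Finset.mem_singleton] at ha
      simp only [Finset.mem_range]; omega
    · intro a ha
      simp only [Finset.mem_range] at ha
      simp only [Finset.mem_sdiff, Finset.mem_range, Finset.mem_singleton]; omega
    · intro a ha
      simp only [Finset.mem_sdiff, Finset.mem_range, Finset.mem_singleton] at ha
      omega
    · intro a ha
      simp only [Finset.mem_range] at ha; omega
    · intro j hj
      simp only [Finset.mem_sdiff, Finset.mem_range, Finset.mem_singleton] at hj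
      have hj1 : 1 ≤ j := by omega
      have hjm : j ≤ m := by omega
      have hjne : (j : ℝ) ≠ 0 := by exact_mod_cast (by omega : j ≠ 0)
      have hp : (lam/4 : ℝ)^(m-j) * (lam/4)^(j-1) = (lam/4)^(m-1) := by
        rw [← pow_add]; congr 1; omega
      have hhalf : (1 / (2 * (j:ℝ))) * (j:ℝ) = 1/2 := by field_simp
      rw [hneg, mul_pow]
      linear_combination (((2*m).choose (m-j) : ℝ) * (-1)^(m-j) * (1/(2*(j:ℝ))) * (j:ℝ)) * hp
        + (((2*m).choose (m-j) : ℝ) * (-1)^(m-j) * (lam/4)^(m-1)) * hhalf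
  rw [hsum, ← Finset.sum_mul]
  rw [hneg, mul_pow]
  linear_combination (-(1/4) * (lam/4)^(m-1)) * hkey
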